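/- Let ε > 0, W_ε(x) = (1/(2ε)) e^{−|x|/ε}, and let u : ℝ → ℝ be continuous, bounded, integrable and square-integrable. Then |∫_ℝ u(x)·(u(x) − (W_ε ∗ u)(x)) dx| ≤ ε² · ‖u‖_{L²(ℝ)} · ‖(W_ε ∗ u)''‖_{L²(ℝ)}. -/

import Mathlib

open MeasureTheory Set

private lemma ftc_Iic {f : ℝ → ℝ} (hf_cont : Continuous f)
    (hf_int : ∀ x : ℝ, IntegrableOn f (Iic x) volume) (x : ℝ) :
    HasDerivAt (fun s => ∫ y in Iic s, f y) (f x) x := by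
  have key : ∀ s : ℝ, (∫ y in Iic s, f y) = (∫ y in Iic (0:ℝ), f y) + ∫ t in (0:ℝ)..s, f t := by
    intro s
    rw [← intervalIntegral.integral_Iic_sub_Iic (hf_int 0) (hf_int s)]
    ring
  have hI : HasDerivAt (fun s => (∫ y in Iic (0:ℝ), f y) + ∫ t in (0:ℝ)..s, f t) (f x) x :=
    (intervalIntegral.integral_hasDerivAt_right (hf_cont.intervalIntegrable 0 x)
      hf_cont.aestronglyMeasurable.stronglyMeasurableAtFilter hf_cont.continuousAt).const_add _
  exact hI.congr_of_eventuallyEq (Filter.Eventually.of_forall key)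

private lemma exp_mul_int {ε : ℝ} (hε : 0 < ε) {u : ℝ → ℝ} (hu_cont : Continuous u)
    (hu_int : Integrable u (volume : Measure ℝ)) (x : ℝ) :
    IntegrableOn (fun y => Real.exp (y / ε) * u y) (Iic x) volume := by
  refine Integrable.mono' ((hu_int.abs.restrict).const_mul (Real.exp (x / ε)))
    (((Real.continuous_exp.comp (continuous_id.div_const ε)).mul
      hu_cont).aestronglyMeasurable.restrict) ?_
  filter_upwards [ae_restrict_mem measurableSet_Iic] with y hy
  have h1 : Real.exp (y / ε) ≤ Real.exp (x / ε) := Real.exp_le_exp.2 (by gcongr; exact hy)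
  have h2 : ‖Real.exp (y / ε) * u y‖ = Real.exp (y / ε) * |u y| := by
    rw [norm_mul, Real.norm_eq_abs, Real.norm_eq_abs, abs_of_pos (Real.exp_pos _)]
  rw [h2]
  exact mul_le_mul_of_nonneg_right h1 (abs_nonneg _)

/-- Quantitative energy estimate:
`|∫ u (u − W_ε ∗ u)| ≤ ε² ‖u‖_{L²} ‖(W_ε ∗ u)''‖_{L²}`. -/
theorem energy_difference_estimate (ε : ℝ) (hε : 0 < ε)
    (Wε : ℝ → ℝ) (hW : ∀ x, Wε x = (1 / (2 * ε)) * Real.exp (-|x| / ε))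
    (u : ℝ → ℝ) (hu_cont : Continuous u) (hu_bdd : ∃ C, ∀ x, |u x| ≤ C)
    (hu_int : Integrable u (volume : Measure ℝ))
    (hu_L2 : MemLp u 2 (volume : Measure ℝ)) :
    ENNReal.ofReal |∫ x : ℝ, u x * (u x - ∫ y : ℝ, Wε (x - y) * u y)|
      ≤ ENNReal.ofReal (ε ^ 2) * eLpNorm u 2 (volume : Measure ℝ) *
        eLpNorm (deriv (deriv (fun z => ∫ y : ℝ, Wε (z - y) * u y))) 2 (volume : Measure ℝ) := by
  have hεne : ε ≠ 0 := ne_of_gt hε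
  set f : ℝ → ℝ := fun y => Real.exp (y / ε) * u y with hf_def
  set g : ℝ → ℝ := fun y => Real.exp (y / ε) * u (-y) with hg_def
  have hf_cont : Continuous f :=
    (Real.continuous_exp.comp (continuous_id.div_const ε)).mul hu_cont
  have hg_cont : Continuous g :=
    (Real.continuous_exp.comp (continuous_id.div_const ε)).mul (hu_cont.comp continuous_neg)
  have hf_int : ∀ x : ℝ, IntegrableOn f (Iic x) volume := exp_mul_int hε hu_cont hu_int
  have hg_int : ∀ x : ℝ, IntegrableOn g (Iic x) volume :=
    exp_mul_int hε (hu_cont.comp continuous_neg) hu_int.comp_neg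
  set F : ℝ → ℝ := fun s => ∫ y in Iic s, f y with hF_def
  set G : ℝ → ℝ := fun s => ∫ y in Iic s, g y with hG_def
  have hF : ∀ x, HasDerivAt F (f x) x := ftc_Iic hf_cont hf_int
  have hG : ∀ x, HasDerivAt G (g x) x := ftc_Iic hg_cont hg_int
  set v : ℝ → ℝ := fun z => ∫ y : ℝ, Wε (z - y) * u y with hv_def
  set v1 : ℝ → ℝ := fun x =>
    (1 / (2 * ε)) * (Real.exp (-x / ε) * F x + Real.exp (x / ε) * G (-x)) with hv1_def
  set v2 : ℝ → ℝ := fun x =>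
    (1 / (2 * ε ^ 2)) * (-(Real.exp (-x / ε) * F x) + Real.exp (x / ε) * G (-x)) with hv2_def
  set v3 : ℝ → ℝ := fun x => (v1 x - u x) / ε ^ 2 with hv3_def
  -- Wε is continuous and bounded
  have hW_cont : Continuous Wε := by
    have : Wε = fun x => (1 / (2 * ε)) * Real.exp (-|x| / ε) := funext hW
    rw [this]
    exact continuous_const.mul (Real.continuous_exp.comp ((continuous_abs.neg).div_const ε))
  -- the convolution integrand is integrable
  have hker_int : ∀ x : ℝ, Integrable (fun y => Wε (x - y) * u y) volume := by
    intro x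
    refine Integrable.mono' (hu_int.abs.const_mul (1 / (2 * ε)))
      ((hW_cont.comp (continuous_const.sub continuous_id)).mul hu_cont).aestronglyMeasurable ?_
    refine Filter.Eventually.of_forall fun y => ?_
    have hWnn : 0 ≤ Wε (x - y) := by
      rw [hW]; positivity
    have hWle : Wε (x - y) ≤ 1 / (2 * ε) := by
      rw [hW]
      have h1 : Real.exp (-|x - y| / ε) ≤ 1 := by
        rw [Real.exp_le_one_iff]
        have : 0 ≤ |x - y| / ε := by positivity
        linarith [neg_div ε |x - y|]
      calc 1 / (2 * ε) * Real.exp (-|x - y| / ε) ≤ 1 / (2 * ε) * 1 := by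
            apply mul_le_mul_of_nonneg_left h1; positivity
        _ = 1 / (2 * ε) := mul_one _
    rw [norm_mul, Real.norm_eq_abs, Real.norm_eq_abs, abs_of_nonneg hWnn]
    exact mul_le_mul_of_nonneg_right hWle (abs_nonneg _)
  -- v = v1
  have hveq : ∀ x, v x = v1 x := by
    intro x
    have hsplit : (∫ y in Iic x, Wε (x - y) * u y) + (∫ y in (Iic x)ᶜ, Wε (x - y) * u y)
        = ∫ y : ℝ, Wε (x - y) * u y := integral_add_compl measurableSet_Iic (hker_int x)
    have hIic : (∫ y in Iic x, Wε (x - y) * u y)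
        = (1 / (2 * ε)) * (Real.exp (-x / ε) * F x) := by
      have : ∀ y ∈ Iic x, Wε (x - y) * u y
          = (1 / (2 * ε)) * Real.exp (-x / ε) * f y := by
        intro y hy
        have hxy : 0 ≤ x - y := by simpa using sub_nonneg.2 (mem_Iic.1 hy)
        rw [hW, abs_of_nonneg hxy, hf_def]
        rw [show -(x - y) / ε = -x / ε + y / ε by ring, Real.exp_add]
        ring
      rw [setIntegral_congr_fun measurableSet_Iic this, integral_const_mul]
      rw [hF_def]; ring
    have hIoi : (∫ y in (Iic x)ᶜ, Wε (x - y) * u y)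
        = (1 / (2 * ε)) * (Real.exp (x / ε) * G (-x)) := by
      rw [compl_Iic]
      have : ∀ y ∈ Ioi x, Wε (x - y) * u y
          = (1 / (2 * ε)) * Real.exp (x / ε) * (Real.exp (-y / ε) * u y) := by
        intro y hy
        have hxy : x - y ≤ 0 := by simpa using sub_nonpos.2 (le_of_lt (mem_Ioi.1 hy))
        rw [hW, abs_of_nonpos hxy]
        rw [show -(-(x - y)) / ε = x / ε + -y / ε by ring, Real.exp_add]
        ring
      rw [setIntegral_congr_fun measurableSet_Ioi this, integral_const_mul]
      have hrefl : (∫ y in Ioi x, Real.exp (-y / ε) * u y)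
          = ∫ t in Iic (-x), Real.exp (t / ε) * u (-t) := by
        have h := integral_comp_neg_Iic (-x) (fun t => Real.exp (-t / ε) * u t)
        simp only [neg_neg] at h
        exact h.symm
      rw [hrefl, ← hg_def]
      rw [hG_def]; ring
    rw [hv_def, hv1_def]
    simp only [← hsplit, hIic, hIoi]
    ring
  -- exp auxiliary
  have hexp : ∀ x : ℝ, Real.exp (-x / ε) * Real.exp (x / ε) = 1 := by
    intro x
    rw [← Real.exp_add, show -x / ε + x / ε = 0 by ring, Real.exp_zero]
  -- derivative of v1 is v2
  have hv1' : ∀ x, HasDerivAt v1 (v2 x) x := by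
    intro x
    have he1 : HasDerivAt (fun x : ℝ => Real.exp (-x / ε))
        (Real.exp (-x / ε) * (-1 / ε)) x := by
      have : HasDerivAt (fun x : ℝ => -x / ε) (-1 / ε) x :=
        ((hasDerivAt_id x).neg.div_const ε)
      exact this.exp
    have he2 : HasDerivAt (fun x : ℝ => Real.exp (x / ε))
        (Real.exp (x / ε) * (1 / ε)) x := by
      have : HasDerivAt (fun x : ℝ => x / ε) (1 / ε) x := (hasDerivAt_id x).div_const ε
      simpa using this.exp
    have hGn : HasDerivAt (fun x : ℝ => G (-x)) (g (-x) * (-1)) x :=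
      (hG (-x)).comp x (hasDerivAt_neg x)
    have H : HasDerivAt v1
        ((1 / (2 * ε)) * ((Real.exp (-x / ε) * (-1 / ε)) * F x + Real.exp (-x / ε) * f x
          + ((Real.exp (x / ε) * (1 / ε)) * G (-x) + Real.exp (x / ε) * (g (-x) * (-1))))) x := by
      exact (((he1.mul (hF x)).add (he2.mul hGn)).const_mul _)
    convert H using 1
    have h1 : Real.exp (-x / ε) * f x = u x := by
      rw [hf_def]; rw [show Real.exp (-x/ε) * (Real.exp (x/ε) * u x)
        = (Real.exp (-x/ε) * Real.exp (x/ε)) * u x by ring, hexp, one_mul]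
    have h2 : Real.exp (x / ε) * (g (-x) * -1) = -u x := by
      rw [show Real.exp (x/ε) * (g (-x) * -1) = -(Real.exp (x/ε) * g (-x)) by ring]
      rw [hg_def]
      simp only [neg_neg]
      rw [show Real.exp (x/ε) * (Real.exp (-x/ε) * u x)
        = (Real.exp (-x/ε) * Real.exp (x/ε)) * u x by ring, hexp, one_mul]
    rw [h1, h2, hv2_def]
    field_simp
    ring
  -- derivative of v2 is v3
  have hv2' : ∀ x, HasDerivAt v2 (v3 x) x := by
    intro x
    have he1 : HasDerivAt (fun x : ℝ => Real.exp (-x / ε))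
        (Real.exp (-x / ε) * (-1 / ε)) x :=
      (((hasDerivAt_id x).neg.div_const ε)).exp
    have he2 : HasDerivAt (fun x : ℝ => Real.exp (x / ε))
        (Real.exp (x / ε) * (1 / ε)) x := by
      simpa using ((hasDerivAt_id x).div_const ε).exp
    have hGn : HasDerivAt (fun x : ℝ => G (-x)) (g (-x) * (-1)) x :=
      (hG (-x)).comp x (hasDerivAt_neg x)
    have H : HasDerivAt v2
        ((1 / (2 * ε ^ 2)) * (-((Real.exp (-x / ε) * (-1 / ε)) * F x + Real.exp (-x / ε) * f x)
          + ((Real.exp (x / ε) * (1 / ε)) * G (-x) + Real.exp (x / ε) * (g (-x) * (-1))))) x := by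
      exact ((((he1.mul (hF x)).neg).add (he2.mul hGn)).const_mul _)
    convert H using 1
    have h1 : Real.exp (-x / ε) * f x = u x := by
      rw [hf_def]; rw [show Real.exp (-x/ε) * (Real.exp (x/ε) * u x)
        = (Real.exp (-x/ε) * Real.exp (x/ε)) * u x by ring, hexp, one_mul]
    have h2 : Real.exp (x / ε) * (g (-x) * -1) = -u x := by
      rw [show Real.exp (x/ε) * (g (-x) * -1) = -(Real.exp (x/ε) * g (-x)) by ring]
      rw [hg_def]
      simp only [neg_neg]
      rw [show Real.exp (x/ε) * (Real.exp (-x/ε) * u x)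
        = (Real.exp (-x/ε) * Real.exp (x/ε)) * u x by ring, hexp, one_mul]
    rw [h1, h2, hv3_def, hv1_def]
    field_simp
    ring
  have hvfun : v = v1 := funext hveq
  have hdd : deriv (deriv v) = v3 := by
    rw [hvfun]
    have h1 : deriv v1 = v2 := funext fun x => (hv1' x).deriv
    rw [h1]
    exact funext fun x => (hv2' x).deriv
  have hv1_cont : Continuous v1 :=
    continuous_iff_continuousAt.2 fun x => (hv1' x).continuousAt
  have hv3_cont : Continuous v3 := (hv1_cont.sub hu_cont).div_const _
  -- rewrite the goal
  have hgoal_fun : (deriv (deriv fun z => ∫ y : ℝ, Wε (z - y) * u y)) = v3 := hdd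
  rw [hgoal_fun]
  have hpoint : ∀ x, u x * (u x - v x) = -(ε ^ 2) * (u x * v3 x) := by
    intro x
    rw [hveq x, hv3_def]
    field_simp
    ring
  have hint_eq : (∫ x : ℝ, u x * (u x - ∫ y : ℝ, Wε (x - y) * u y))
      = -(ε ^ 2) * ∫ x, u x * v3 x := by
    rw [← integral_const_mul]
    exact integral_congr_ae (Filter.Eventually.of_forall hpoint)
  rw [hint_eq, abs_mul, abs_neg, abs_of_nonneg (sq_nonneg ε),
    ENNReal.ofReal_mul (sq_nonneg ε), mul_assoc]
  refine mul_le_mul_right ?_ _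
  -- Cauchy–Schwarz
  calc ENNReal.ofReal |∫ x, u x * v3 x|
      = ‖∫ x, u x * v3 x‖₊ := (Real.enorm_eq_ofReal_abs _).symm
    _ ≤ ∫⁻ x, ‖u x * v3 x‖₊ ∂volume := enorm_integral_le_lintegral_enorm _
    _ = ∫⁻ x, (‖u x‖₊ : ENNReal) * ‖v3 x‖₊ ∂volume := by
        simp_rw [nnnorm_mul, ENNReal.coe_mul]
    _ ≤ (∫⁻ x, (‖u x‖₊ : ENNReal) ^ (2:ℝ) ∂volume) ^ (1/(2:ℝ)) *
        (∫⁻ x, (‖v3 x‖₊ : ENNReal) ^ (2:ℝ) ∂volume) ^ (1/(2:ℝ)) := by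
        exact ENNReal.lintegral_mul_le_Lp_mul_Lq volume (Real.holderConjugate_iff_eq_conjExponent one_lt_two |>.2 (by norm_num))
          (hu_cont.measurable.nnnorm.coe_nnreal_ennreal.aemeasurable)
          (hv3_cont.measurable.nnnorm.coe_nnreal_ennreal.aemeasurable)
    _ = eLpNorm u 2 volume * eLpNorm v3 2 volume := by
        rw [eLpNorm_eq_lintegral_rpow_enorm_toReal (by norm_num) (by norm_num),
          eLpNorm_eq_lintegral_rpow_enorm_toReal (by norm_num) (by norm_num)]
        norm_num
        rfl
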